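/- Let G be a maximal outerplane graph on Fin n with red vertex set R of even cardinality. If G contains a blue diagonal, then G is augmentable to meet R. -/

import Mathlib

/-- `x` lies strictly inside the open clockwise arc from `a` to `b` on the convex
`n`-gon whose vertices are `Fin n` in clockwise cyclic order. -/
def InArc (n : ℕ) (a b x : Fin n) : Prop :=
  0 < (x - a).val ∧ (x - a).val < (b - a).val

/-- Two chords of the convex `n`-gon cross: their four endpoints are distinct and
interleave in the cyclic order, i.e. one endpoint of the second chord lies strictly
inside each of the two open arcs determined by the first chord. -/
def Cross (n : ℕ) (e f : Sym2 (Fin n)) : Prop :=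
  ∃ a b c d : Fin n, e = s(a, b) ∧ f = s(c, d) ∧ InArc n a b c ∧ InArc n b a d

/-- A boundary edge of the convex `n`-gon: a chord of the form `{i, i+1 (mod n)}`. -/
def IsBoundaryEdge (n : ℕ) (e : Sym2 (Fin n)) : Prop :=
  ∃ i j : Fin n, e = s(i, j) ∧ (j - i).val = 1

/-- A diagonal of the convex `n`-gon: a chord (pair of distinct vertices) that is not
a boundary edge. -/
def IsDiagonal (n : ℕ) (e : Sym2 (Fin n)) : Prop :=
  ¬ e.IsDiag ∧ ¬ IsBoundaryEdge n e

/-- A maximal outerplane graph (MOP) on `Fin n` (`n ≥ 3`): a simple graph whose edge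
set consists of all `n` boundary edges together with `n - 3` pairwise non-crossing
diagonals. -/
def IsMOP (n : ℕ) (G : SimpleGraph (Fin n)) : Prop :=
  3 ≤ n ∧
  (∀ e, IsBoundaryEdge n e → e ∈ G.edgeSet) ∧
  (∀ e ∈ G.edgeSet, IsBoundaryEdge n e ∨ IsDiagonal n e) ∧
  (∀ e ∈ G.edgeSet, ∀ f ∈ G.edgeSet, ¬ Cross n e f) ∧
  {e ∈ G.edgeSet | IsDiagonal n e}.ncard = n - 3

/-- `G` is (topologically) augmentable to meet the parity constraints with red set `R`:
there is a simple graph `H` on `Fin n`, edge-disjoint from `G`, whose edges are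
pairwise non-crossing chords, in which every red vertex has odd degree and every blue
vertex has even degree. -/
def Augmentable (n : ℕ) (G : SimpleGraph (Fin n)) (R : Set (Fin n)) : Prop :=
  ∃ H : SimpleGraph (Fin n),
    (∀ e ∈ H.edgeSet, e ∉ G.edgeSet) ∧
    (∀ e ∈ H.edgeSet, ∀ f ∈ H.edgeSet, ¬ Cross n e f) ∧
    (∀ v : Fin n, v ∈ R ↔ Odd ((H.neighborSet v).ncard))

/-- Condition (i): `G` has a blue diagonal (both endpoints blue, i.e. not in `R`). -/
def HasBlueDiagonal (n : ℕ) (G : SimpleGraph (Fin n)) (R : Set (Fin n)) : Prop :=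
  ∃ e ∈ G.edgeSet, IsDiagonal n e ∧ ∀ v ∈ e, v ∉ R

/-! ### Auxiliary lemmas -/

lemma fin_sub_val {n : ℕ} (x y : Fin n) :
    (x - y).val = if y.val ≤ x.val then x.val - y.val else x.val + n - y.val := by
  rw [Fin.sub_def]
  simp only [Fin.val_mk]
  have hx := x.isLt; have hy := y.isLt
  rcases le_or_gt y.val x.val with h | h
  · rw [if_pos h, show n - y.val + x.val = (x.val - y.val) + n by omega,
      Nat.add_mod_right, Nat.mod_eq_of_lt (by omega)]
  · rw [if_neg (by omega), Nat.mod_eq_of_lt (by omega)]; omega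

lemma sub_val_rel {n : ℕ} (a x y : Fin n) :
    (x - y).val = if (y - a).val ≤ (x - a).val then (x - a).val - (y - a).val
      else (x - a).val + n - (y - a).val := by
  have e1 := fin_sub_val x y; have e2 := fin_sub_val x a; have e3 := fin_sub_val y a
  have := x.isLt; have := y.isLt; have := a.isLt
  split_ifs at * <;> omega

lemma sub_val_inj {n : ℕ} {x y a : Fin n} (h : (x - a).val = (y - a).val) : x = y := by
  have e1 := fin_sub_val x a; have e2 := fin_sub_val y a
  have := x.isLt; have := y.isLt; have := a.isLt
  apply Fin.ext; split_ifs at e1 e2 <;> omega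

lemma inarc_ne {n : ℕ} {u v x : Fin n} (h : InArc n u v x) : x ≠ u ∧ x ≠ v := by
  obtain ⟨h1, h2⟩ := h
  constructor
  · rintro rfl; have hxx := fin_sub_val x x; simp at hxx; omega
  · rintro rfl; exact absurd h2 (lt_irrefl _)

lemma inarc_asymm {n : ℕ} {u v x : Fin n} (h : InArc n u v x) (h' : InArc n v u x) : False := by
  obtain ⟨h1, h2⟩ := h; obtain ⟨h3, h4⟩ := h'
  have e1 := fin_sub_val x u; have e2 := fin_sub_val v u
  have e3 := fin_sub_val x v; have e4 := fin_sub_val u v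
  have := u.isLt; have := v.isLt; have := x.isLt
  split_ifs at e1 e2 e3 e4 <;> omega

lemma shareNoCross {n : ℕ} {e f : Sym2 (Fin n)} (x : Fin n) (hx : x ∈ e) (hy : x ∈ f) :
    ¬ Cross n e f := by
  rintro ⟨p, q, c, d, rfl, rfl, h1, h2⟩
  obtain ⟨hcp, hcq⟩ := inarc_ne h1
  obtain ⟨hdq, hdp⟩ := inarc_ne h2
  rw [Sym2.mem_iff] at hx hy
  rcases hx with rfl | rfl <;> rcases hy with h | h <;> simp_all

lemma notBoth {n : ℕ} {u v w z : Fin n} (h1 : InArc n u v w) (h2 : InArc n u v z)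
    (h3 : InArc n w z u) (h4 : InArc n z w v) : False := by
  obtain ⟨a1, a2⟩ := h1; obtain ⟨b1, b2⟩ := h2
  obtain ⟨c1, c2⟩ := h3; obtain ⟨d1, d2⟩ := h4
  have e1 := fin_sub_val w u; have e2 := fin_sub_val v u
  have e3 := fin_sub_val z u; have e4 := fin_sub_val u w
  have e5 := fin_sub_val z w; have e6 := fin_sub_val v z
  have e7 := fin_sub_val w z
  have := u.isLt; have := v.isLt; have := w.isLt; have := z.isLt
  split_ifs at e1 e2 e3 e4 e5 e6 e7 <;> omega

lemma notBoth2 {n : ℕ} {u v w z : Fin n} (h1 : InArc n u v w) (h2 : InArc n u v z)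
    (h3 : InArc n w z v) (h4 : InArc n z w u) : False := by
  obtain ⟨a1, a2⟩ := h1; obtain ⟨b1, b2⟩ := h2
  obtain ⟨c1, c2⟩ := h3; obtain ⟨d1, d2⟩ := h4
  have e1 := fin_sub_val w u; have e2 := fin_sub_val v u
  have e3 := fin_sub_val z u; have e4 := fin_sub_val v w
  have e5 := fin_sub_val z w; have e6 := fin_sub_val u z
  have e7 := fin_sub_val w z
  have := u.isLt; have := v.isLt; have := w.isLt; have := z.isLt
  split_ifs at e1 e2 e3 e4 e5 e6 e7 <;> omega

lemma bothInArcNoCross {n : ℕ} {u v w z : Fin n} (h1 : InArc n u v w) (h2 : InArc n u v z) :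
    ¬ Cross n s(u, v) s(w, z) ∧ ¬ Cross n s(w, z) s(u, v) := by
  constructor
  · rintro ⟨p, q, c, d, he, hf, g1, g2⟩
    rw [Sym2.eq_iff] at he hf
    rcases he with ⟨rfl, rfl⟩ | ⟨rfl, rfl⟩ <;> rcases hf with ⟨rfl, rfl⟩ | ⟨rfl, rfl⟩
    · exact inarc_asymm h2 g2
    · exact inarc_asymm h1 g2
    · exact inarc_asymm h1 g1
    · exact inarc_asymm h2 g1
  · rintro ⟨p, q, c, d, he, hf, g1, g2⟩
    rw [Sym2.eq_iff] at he hf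
    rcases he with ⟨rfl, rfl⟩ | ⟨rfl, rfl⟩ <;> rcases hf with ⟨rfl, rfl⟩ | ⟨rfl, rfl⟩
    · exact notBoth h1 h2 g1 g2
    · exact notBoth2 h1 h2 g1 g2
    · exact notBoth h2 h1 g1 g2
    · exact notBoth2 h2 h1 g1 g2

lemma parity_step {n : ℕ} {S : Set (Fin n)} {w : Fin n} {P : Prop}
    (h : ¬ (P ↔ Odd S.ncard)) : P ↔ Odd ({u | Xor' (u ∈ S) (u = w)}.ncard) := by
  by_cases hw : w ∈ S
  · have hs : {u | Xor' (u ∈ S) (u = w)} = S \ {w} := by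
      ext u
      simp only [Set.mem_setOf_eq, Set.mem_diff, Set.mem_singleton_iff, Xor']
      by_cases hu : u = w
      · subst hu; simp [hw]
      · simp [hu, Xor]
    rw [hs, Set.ncard_diff_singleton_of_mem hw]
    have h1 : 0 < S.ncard := (Set.ncard_pos (Set.toFinite S)).mpr ⟨w, hw⟩
    rw [Nat.odd_iff] at h ⊢
    by_cases hP : P <;> simp [hP] at h ⊢ <;> omega
  · have hs : {u | Xor' (u ∈ S) (u = w)} = insert w S := by
      ext u
      simp only [Set.mem_setOf_eq, Set.mem_insert_iff, Xor']
      by_cases hu : u = w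
      · subst hu; simp [hw]
      · simp [hu, Xor]
    rw [hs, Set.ncard_insert_of_notMem hw]
    rw [Nat.odd_iff] at h ⊢
    by_cases hP : P <;> simp [hP] at h ⊢ <;> omega

/-! ### The augmenting graph -/

def bRel {n : ℕ} (R : Set (Fin n)) (a x0 y0 : Fin n) (d : ℕ) (u v : Fin n) : Prop :=
  (u ∈ R ∧ 0 < (u - a).val ∧ (u - a).val < d ∧ v = y0) ∨
  (v ∈ R ∧ 0 < (v - a).val ∧ (v - a).val < d ∧ u = y0) ∨
  (u ∈ R ∧ d < (u - a).val ∧ v = x0) ∨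
  (v ∈ R ∧ d < (v - a).val ∧ u = x0)

def qRel {n : ℕ} (R : Set (Fin n)) (a x0 y0 : Fin n) (d : ℕ) (fl : Prop) (u v : Fin n) : Prop :=
  Xor' (bRel R a x0 y0 d u v) (fl ∧ ((u = x0 ∧ v = y0) ∨ (u = y0 ∧ v = x0)))

lemma bRel_comm {n : ℕ} {R : Set (Fin n)} {a x0 y0 : Fin n} {d : ℕ} {u v : Fin n}
    (h : bRel R a x0 y0 d u v) : bRel R a x0 y0 d v u := by
  rcases h with h | h | h | h
  · exact Or.inr (Or.inl h)
  · exact Or.inl h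
  · exact Or.inr (Or.inr (Or.inr h))
  · exact Or.inr (Or.inr (Or.inl h))

lemma qRel_symm {n : ℕ} {R : Set (Fin n)} {a x0 y0 : Fin n} {d : ℕ} {fl : Prop} {u v : Fin n}
    (h : qRel R a x0 y0 d fl u v) : qRel R a x0 y0 d fl v u := by
  have tog : ∀ p q : Fin n, (p = x0 ∧ q = y0) ∨ (p = y0 ∧ q = x0) →
      (q = x0 ∧ p = y0) ∨ (q = y0 ∧ p = x0) := by
    rintro p q (⟨h1, h2⟩ | ⟨h1, h2⟩)
    · exact Or.inr ⟨h2, h1⟩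
    · exact Or.inl ⟨h2, h1⟩
  rcases h with ⟨hb, hn⟩ | ⟨ht, hn⟩
  · exact Or.inl ⟨bRel_comm hb, fun h' => hn ⟨h'.1, tog _ _ h'.2⟩⟩
  · exact Or.inr ⟨⟨ht.1, tog _ _ ht.2⟩, fun hb => hn (bRel_comm hb)⟩

lemma qRel_irrefl {n : ℕ} {R : Set (Fin n)} {a x0 y0 : Fin n} {d : ℕ} {fl : Prop}
    (hx0 : (x0 - a).val = 1) (hy0 : (y0 - a).val = d + 1) (hd : 2 ≤ d) (u : Fin n) :
    ¬ qRel R a x0 y0 d fl u u := by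
  rintro (⟨(⟨_, _, h2, rfl⟩ | ⟨_, _, h2, rfl⟩ | ⟨_, h2, rfl⟩ | ⟨_, h2, rfl⟩), -⟩ |
    ⟨⟨_, (⟨rfl, h⟩ | ⟨rfl, h⟩)⟩, -⟩) <;> try subst h
  all_goals omega

def HH {n : ℕ} (R : Set (Fin n)) (a x0 y0 : Fin n) (d : ℕ) (fl : Prop)
    (hx0 : (x0 - a).val = 1) (hy0 : (y0 - a).val = d + 1) (hd : 2 ≤ d) : SimpleGraph (Fin n) :=
  ⟨qRel R a x0 y0 d fl, ⟨fun _ _ h => qRel_symm h⟩, ⟨fun u h => qRel_irrefl hx0 hy0 hd u h⟩⟩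


/-- Let `G` be a maximal outerplane graph on `Fin n` with red vertex set
`R` of even cardinality.  If `G` contains a blue diagonal, then `G` is augmentable to
meet `R`. -/
theorem stmt_9 (n : ℕ) (G : SimpleGraph (Fin n)) (hG : IsMOP n G)
    (R : Set (Fin n)) (hR : Even R.ncard)
    (hblue : HasBlueDiagonal n G R) :
    Augmentable n G R := by
  classical
  have hn3 : 3 ≤ n := hG.1
  haveI : NeZero n := ⟨by omega⟩
  obtain ⟨e, heG, hdiag, hbl⟩ := hblue
  induction e using Sym2.ind with
  | _ a b =>
  obtain ⟨hnd, hnbd⟩ := hdiag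
  have hab : a ≠ b := by
    rintro rfl; exact hnd ((Sym2.isDiag_iff_proj_eq : s(a, a).IsDiag ↔ a = a).mpr rfl)
  have hb1 : (b - a).val ≠ 1 := fun h => hnbd ⟨a, b, rfl, h⟩
  have ha1 : (a - b).val ≠ 1 := fun h => hnbd ⟨b, a, Sym2.eq_swap, h⟩
  have hane : a.val ≠ b.val := fun h => hab (Fin.ext h)
  have ea := fin_sub_val b a
  have eb := fin_sub_val a b
  have hva := a.isLt; have hvb := b.isLt
  set d : ℕ := (b - a).val with hdd
  have hd2a : 2 ≤ d := by split_ifs at ea eb <;> omega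
  have hd2b : d + 2 ≤ n := by split_ifs at ea eb <;> omega
  have haR : a ∉ R := hbl a (by simp)
  have hbR : b ∉ R := hbl b (by simp)
  set x0 : Fin n := a + 1 with hx0def
  set y0 : Fin n := b + 1 with hy0def
  have hx0 : (x0 - a).val = 1 := by
    have h1 : x0.val = (a.val + 1) % n := by
      rw [hx0def, Fin.val_add, Fin.val_one', Nat.mod_eq_of_lt (show (1:ℕ) < n by omega)]
    have h2 := fin_sub_val x0 a
    rcases Nat.lt_or_ge (a.val + 1) n with h | h
    · rw [Nat.mod_eq_of_lt h] at h1; split_ifs at h2 <;> omega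
    · have h3 : a.val + 1 = n := by omega
      rw [h3, Nat.mod_self] at h1; split_ifs at h2 <;> omega
  have hy0 : (y0 - a).val = d + 1 := by
    have h1 : y0.val = (b.val + 1) % n := by
      rw [hy0def, Fin.val_add, Fin.val_one', Nat.mod_eq_of_lt (show (1:ℕ) < n by omega)]
    have h2 := fin_sub_val y0 a
    rcases Nat.lt_or_ge (b.val + 1) n with h | h
    · rw [Nat.mod_eq_of_lt h] at h1; split_ifs at h2 ea <;> omega
    · have h3 : b.val + 1 = n := by omega
      rw [h3, Nat.mod_self] at h1; split_ifs at h2 ea <;> omega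
  have hxyne : x0 ≠ y0 := fun h => by rw [h, hy0] at hx0; omega
  have haa : ((a : Fin n) - a).val = 0 := by rw [fin_sub_val]; simp
  have hta : ∀ x ∈ R, (x - a).val ≠ 0 ∧ (x - a).val ≠ d := by
    intro x hx
    constructor
    · intro h
      have hxa : x = a := sub_val_inj (by rw [h, haa])
      exact haR (hxa ▸ hx)
    · intro h
      have hxb : x = b := sub_val_inj (h.trans hdd)
      exact hbR (hxb ▸ hx)
  set Sa : Set (Fin n) := {u | u ∈ R ∧ 0 < (u - a).val ∧ (u - a).val < d} with hSa
  set Sb : Set (Fin n) := {u | u ∈ R ∧ d < (u - a).val} with hSb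
  set N0 : Set (Fin n) := {u | (u ∈ R ∧ d < (u - a).val) ∨ (u = y0 ∧ x0 ∈ R)} with hN0
  set N1 : Set (Fin n) :=
    {u | (u ∈ R ∧ 0 < (u - a).val ∧ (u - a).val < d) ∨ (u = x0 ∧ y0 ∈ R)} with hN1
  set fl : Prop := ¬ (x0 ∈ R ↔ Odd N0.ncard) with hfl
  have hclass : ∀ u v : Fin n, qRel R a x0 y0 d fl u v →
      (∃ w, s(u, v) = s(w, y0) ∧ 0 < (w - a).val ∧ (w - a).val < d) ∨
      (∃ z, s(u, v) = s(x0, z) ∧ d < (z - a).val) := by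
    intro u v h
    rcases h with ⟨hb, -⟩ | ⟨⟨-, ht⟩, -⟩
    · rcases hb with ⟨_, h1, h2, rfl⟩ | ⟨_, h1, h2, rfl⟩ | ⟨_, h1, rfl⟩ | ⟨_, h1, rfl⟩
      · exact Or.inl ⟨u, rfl, h1, h2⟩
      · exact Or.inl ⟨v, Sym2.eq_swap, h1, h2⟩
      · exact Or.inr ⟨u, Sym2.eq_swap, h1⟩
      · exact Or.inr ⟨v, rfl, h1⟩
    · rcases ht with ⟨rfl, rfl⟩ | ⟨rfl, rfl⟩
      · exact Or.inl ⟨x0, rfl, by omega, by omega⟩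
      · exact Or.inl ⟨x0, Sym2.eq_swap, by omega, by omega⟩
  have hstrad : ∀ u v : Fin n, qRel R a x0 y0 d fl u v →
      ∃ w z, s(u, v) = s(w, z) ∧ 0 < (w - a).val ∧ (w - a).val < d ∧ d < (z - a).val := by
    intro u v h
    rcases hclass u v h with ⟨w, hw, h1, h2⟩ | ⟨z, hz, h1⟩
    · exact ⟨w, y0, hw, h1, h2, by omega⟩
    · exact ⟨x0, z, hz, by omega, by omega, h1⟩
  refine ⟨HH R a x0 y0 d fl hx0 hy0 hd2a, ?_, ?_, ?_⟩
  · -- edge-disjoint from G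
    intro e he
    induction e using Sym2.ind with
    | _ u v =>
    rw [SimpleGraph.mem_edgeSet] at he
    obtain ⟨w, z, hwz, h1, h2, h3⟩ := hstrad u v he
    rw [hwz]
    intro hmem
    have hzlt := (z - a).isLt
    have r1 := sub_val_rel a z b
    have r2 := sub_val_rel a a b
    rw [← hdd] at r1 r2
    refine hG.2.2.2.1 s(a, b) heG s(w, z) hmem
      ⟨a, b, w, z, rfl, rfl, ⟨h1, by omega⟩, ?_, ?_⟩ <;>
      (rw [haa] at r2; split_ifs at r1 r2 <;> omega)
  · -- pairwise non-crossing
    intro e he f hf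
    induction e using Sym2.ind with
    | _ u v =>
    induction f using Sym2.ind with
    | _ w z =>
    rw [SimpleGraph.mem_edgeSet] at he hf
    have key : ∀ w1 z2 : Fin n, 0 < (w1 - a).val → (w1 - a).val < d → d < (z2 - a).val →
        ¬ Cross n s(w1, y0) s(x0, z2) ∧ ¬ Cross n s(x0, z2) s(w1, y0) := by
      intro w1 z2 a1 a2 d1
      by_cases hwx : w1 = x0
      · constructor
        · exact shareNoCross x0 (by rw [hwx]; exact Sym2.mem_mk_left _ _) (Sym2.mem_mk_left _ _)
        · exact shareNoCross x0 (Sym2.mem_mk_left _ _) (by rw [hwx]; exact Sym2.mem_mk_left _ _)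
      · by_cases hzy : z2 = y0
        · constructor
          · exact shareNoCross y0 (Sym2.mem_mk_right _ _) (by rw [hzy]; exact Sym2.mem_mk_right _ _)
          · exact shareNoCross y0 (by rw [hzy]; exact Sym2.mem_mk_right _ _) (Sym2.mem_mk_right _ _)
        · have hw1x : (w1 - a).val ≠ 1 := fun h => hwx (sub_val_inj (h.trans hx0.symm))
          have hz2y : (z2 - a).val ≠ d + 1 := fun h => hzy (sub_val_inj (h.trans hy0.symm))
          have hz2lt := (z2 - a).isLt
          have i1 : InArc n y0 w1 x0 := by
            have r1 := sub_val_rel a x0 y0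
            have r2 := sub_val_rel a w1 y0
            constructor <;> (split_ifs at r1 r2 <;> omega)
          have i2 : InArc n y0 w1 z2 := by
            have r2 := sub_val_rel a w1 y0
            have r3 := sub_val_rel a z2 y0
            constructor <;> (split_ifs at r2 r3 <;> omega)
          have hB := bothInArcNoCross i1 i2
          constructor
          · rw [show s(w1, y0) = s(y0, w1) from Sym2.eq_swap]; exact hB.1
          · rw [show s(w1, y0) = s(y0, w1) from Sym2.eq_swap]; exact hB.2
    rcases hclass u v he with ⟨w1, hw1, a1, a2⟩ | ⟨z1, hz1, b1⟩ <;>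
      rcases hclass w z hf with ⟨w2, hw2, c1, c2⟩ | ⟨z2, hz2, d1⟩
    · rw [hw1, hw2]; exact shareNoCross y0 (Sym2.mem_mk_right _ _) (Sym2.mem_mk_right _ _)
    · rw [hw1, hz2]; exact (key w1 z2 a1 a2 d1).1
    · rw [hz1, hw2]; exact (key w2 z1 c1 c2 b1).2
    · rw [hz1, hz2]; exact shareNoCross x0 (Sym2.mem_mk_left _ _) (Sym2.mem_mk_left _ _)
  · -- degrees
    intro v
    show v ∈ R ↔ Odd ({u | qRel R a x0 y0 d fl v u}).ncard
    have hsplit : Sa ∪ Sb = R := by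
      ext u
      simp only [Set.mem_union, hSa, hSb, Set.mem_setOf_eq]
      constructor
      · rintro (⟨h, -⟩ | ⟨h, -⟩) <;> exact h
      · intro h
        have h2 := hta u h
        have h3 := (u - a).isLt
        rcases Nat.lt_or_ge (u - a).val d with h4 | h4
        · exact Or.inl ⟨h, by omega, h4⟩
        · exact Or.inr ⟨h, by omega⟩
    have hdisj : Disjoint Sa Sb := by
      rw [Set.disjoint_left]
      rintro u ⟨-, -, h1⟩ ⟨-, h2⟩
      omega
    have hpq : Even (Sa.ncard + Sb.ncard) := by
      rw [← Set.ncard_union_eq hdisj (Set.toFinite _) (Set.toFinite _), hsplit]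
      exact hR
    by_cases hvx : v = x0
    · subst hvx
      have hbase : ∀ u, bRel R a x0 y0 d x0 u ↔ u ∈ N0 := by
        intro u
        simp only [hN0, Set.mem_setOf_eq]
        constructor
        · rintro (⟨h1, h2, h3, rfl⟩ | ⟨h1, h2, h3, h4⟩ | ⟨h1, h2, -⟩ | ⟨h1, h2, -⟩)
          · exact Or.inr ⟨rfl, h1⟩
          · exact absurd h4 hxyne
          · omega
          · exact Or.inl ⟨h1, h2⟩
        · rintro (⟨h1, h2⟩ | ⟨rfl, h1⟩)
          · exact Or.inr (Or.inr (Or.inr ⟨h1, h2, rfl⟩))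
          · exact Or.inl ⟨h1, by omega, by omega, rfl⟩
      by_cases hf : fl
      · have hset : {u | qRel R a x0 y0 d fl x0 u} = {u | Xor' (u ∈ N0) (u = y0)} := by
          ext u
          simp only [Set.mem_setOf_eq]
          constructor
          · rintro (⟨hb, hn⟩ | ⟨⟨-, ht⟩, hn⟩)
            · exact Or.inl ⟨(hbase u).mp hb, fun h => hn ⟨hf, Or.inl ⟨rfl, h⟩⟩⟩
            · rcases ht with ⟨-, rfl⟩ | ⟨h, -⟩
              · exact Or.inr ⟨rfl, fun h => hn ((hbase y0).mpr h)⟩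
              · exact absurd h hxyne
          · rintro (⟨h1, h2⟩ | ⟨rfl, h2⟩)
            · refine Or.inl ⟨(hbase u).mpr h1, ?_⟩
              rintro ⟨-, ⟨-, h⟩ | ⟨h, -⟩⟩
              exacts [h2 h, hxyne h]
            · exact Or.inr ⟨⟨hf, Or.inl ⟨rfl, rfl⟩⟩, fun hb => h2 ((hbase y0).mp hb)⟩
        rw [hset]
        rw [hfl] at hf
        exact parity_step hf
      · have hset : {u | qRel R a x0 y0 d fl x0 u} = N0 := by
          ext u
          simp only [Set.mem_setOf_eq]
          constructor
          · rintro (⟨hb, -⟩ | ⟨⟨hfl', -⟩, -⟩)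
            · exact (hbase u).mp hb
            · exact absurd hfl' hf
          · intro h
            exact Or.inl ⟨(hbase u).mpr h, fun h' => hf h'.1⟩
        rw [hset]
        rw [hfl] at hf
        exact not_not.mp hf
    · by_cases hvy : v = y0
      · subst hvy
        have hbase : ∀ u, bRel R a x0 y0 d y0 u ↔ u ∈ N1 := by
          intro u
          simp only [hN1, Set.mem_setOf_eq]
          constructor
          · rintro (⟨h1, h2, h3, h4⟩ | ⟨h1, h2, h3, -⟩ | ⟨h1, h2, rfl⟩ | ⟨h1, h2, h3⟩)
            · omega
            · exact Or.inl ⟨h1, h2, h3⟩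
            · exact Or.inr ⟨rfl, h1⟩
            · exact absurd h3.symm hxyne
          · rintro (⟨h1, h2, h3⟩ | ⟨rfl, h1⟩)
            · exact Or.inr (Or.inl ⟨h1, h2, h3, rfl⟩)
            · exact Or.inr (Or.inr (Or.inl ⟨h1, by omega, rfl⟩))
        have hbridge : (x0 ∈ R ↔ Odd N0.ncard) ↔ (y0 ∈ R ↔ Odd N1.ncard) := by
          by_cases hx0R : x0 ∈ R <;> by_cases hy0R : y0 ∈ R
          · have e1 : N0 = Sb := by
              ext u
              simp only [hN0, hSb, Set.mem_setOf_eq]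
              constructor
              · rintro (h | ⟨rfl, -⟩)
                · exact h
                · exact ⟨hy0R, by omega⟩
              · exact fun h => Or.inl h
            have e2 : N1 = Sa := by
              ext u
              simp only [hN1, hSa, Set.mem_setOf_eq]
              constructor
              · rintro (h | ⟨rfl, -⟩)
                · exact h
                · exact ⟨hx0R, by omega, by omega⟩
              · exact fun h => Or.inl h
            rw [e1, e2]
            simp only [hx0R, hy0R, true_iff, iff_true]
            rw [Nat.odd_iff, Nat.odd_iff]
            have := Nat.even_iff.mp hpq
            constructor <;> intro <;> omega
          · have e1 : N0 = insert y0 Sb := by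
              ext u
              simp only [hN0, hSb, Set.mem_setOf_eq, Set.mem_insert_iff]
              constructor
              · rintro (h | ⟨rfl, -⟩)
                · exact Or.inr h
                · exact Or.inl rfl
              · rintro (rfl | h)
                · exact Or.inr ⟨rfl, hx0R⟩
                · exact Or.inl h
            have e2 : N1 = Sa := by
              ext u
              simp only [hN1, hSa, Set.mem_setOf_eq]
              constructor
              · rintro (h | ⟨rfl, h⟩)
                · exact h
                · exact absurd h hy0R
              · exact fun h => Or.inl h
            have hy0Sb : y0 ∉ Sb := fun h => hy0R h.1
            rw [e1, e2, Set.ncard_insert_of_notMem hy0Sb]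
            simp only [hx0R, hy0R, true_iff, false_iff]
            rw [Nat.odd_iff, Nat.odd_iff]
            have := Nat.even_iff.mp hpq
            constructor <;> intro <;> omega
          · have e1 : N0 = Sb := by
              ext u
              simp only [hN0, hSb, Set.mem_setOf_eq]
              constructor
              · rintro (h | ⟨rfl, h⟩)
                · exact h
                · exact absurd h hx0R
              · exact fun h => Or.inl h
            have e2 : N1 = insert x0 Sa := by
              ext u
              simp only [hN1, hSa, Set.mem_setOf_eq, Set.mem_insert_iff]
              constructor
              · rintro (h | ⟨rfl, -⟩)
                · exact Or.inr h
                · exact Or.inl rfl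
              · rintro (rfl | h)
                · exact Or.inr ⟨rfl, hy0R⟩
                · exact Or.inl h
            have hx0Sa : x0 ∉ Sa := fun h => hx0R h.1
            rw [e1, e2, Set.ncard_insert_of_notMem hx0Sa]
            simp only [hx0R, hy0R, false_iff, true_iff]
            rw [Nat.odd_iff, Nat.odd_iff]
            have := Nat.even_iff.mp hpq
            constructor <;> intro <;> omega
          · have e1 : N0 = Sb := by
              ext u
              simp only [hN0, hSb, Set.mem_setOf_eq]
              constructor
              · rintro (h | ⟨rfl, h⟩)
                · exact h
                · exact absurd h hx0R
              · exact fun h => Or.inl h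
            have e2 : N1 = Sa := by
              ext u
              simp only [hN1, hSa, Set.mem_setOf_eq]
              constructor
              · rintro (h | ⟨rfl, h⟩)
                · exact h
                · exact absurd h hy0R
              · exact fun h => Or.inl h
            rw [e1, e2]
            simp only [hx0R, hy0R, false_iff]
            rw [Nat.odd_iff, Nat.odd_iff]
            have := Nat.even_iff.mp hpq
            constructor <;> intro <;> omega
        by_cases hf : fl
        · have hf' : ¬ (y0 ∈ R ↔ Odd N1.ncard) := by
            rw [hfl] at hf
            exact fun h => hf (hbridge.mpr h)
          have hset : {u | qRel R a x0 y0 d fl y0 u} = {u | Xor' (u ∈ N1) (u = x0)} := by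
            ext u
            simp only [Set.mem_setOf_eq]
            constructor
            · rintro (⟨hb, hn⟩ | ⟨⟨hfv, ht⟩, hn⟩)
              · exact Or.inl ⟨(hbase u).mp hb, fun h => hn ⟨hf, Or.inr ⟨rfl, h⟩⟩⟩
              · rcases ht with ⟨h, -⟩ | ⟨-, rfl⟩
                · exact absurd h.symm hxyne
                · exact Or.inr ⟨rfl, fun h => hn ((hbase x0).mpr h)⟩
            · rintro (⟨h1, h2⟩ | ⟨rfl, h2⟩)
              · refine Or.inl ⟨(hbase u).mpr h1, ?_⟩
                rintro ⟨-, ⟨h, -⟩ | ⟨-, h⟩⟩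
                exacts [hxyne h.symm, h2 h]
              · exact Or.inr ⟨⟨hf, Or.inr ⟨rfl, rfl⟩⟩, fun hb => h2 ((hbase x0).mp hb)⟩
          rw [hset]
          exact parity_step hf'
        · have hf' : y0 ∈ R ↔ Odd N1.ncard := by
            rw [hfl] at hf
            exact hbridge.mp (not_not.mp hf)
          have hset : {u | qRel R a x0 y0 d fl y0 u} = N1 := by
            ext u
            simp only [Set.mem_setOf_eq]
            constructor
            · rintro (⟨hb, -⟩ | ⟨⟨hfl', -⟩, -⟩)
              · exact (hbase u).mp hb
              · exact absurd hfl' hf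
            · intro h
              exact Or.inl ⟨(hbase u).mpr h, fun h' => hf h'.1⟩
          rw [hset]
          exact hf'
      · -- generic vertex
        have hset : {u | qRel R a x0 y0 d fl v u} = {u | bRel R a x0 y0 d v u} := by
          ext u
          simp only [Set.mem_setOf_eq]
          constructor
          · rintro (⟨hb, -⟩ | ⟨⟨-, ⟨h, -⟩ | ⟨h, -⟩⟩, -⟩)
            · exact hb
            · exact absurd h hvx
            · exact absurd h hvy
          · intro hb
            refine Or.inl ⟨hb, ?_⟩
            rintro ⟨-, ⟨h, -⟩ | ⟨h, -⟩⟩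
            exacts [hvx h, hvy h]
        rw [hset]
        by_cases hvR : v ∈ R
        · obtain ⟨ht0, htd⟩ := hta v hvR
          rcases Nat.lt_or_ge (v - a).val d with hlt | hge
          · have hset2 : {u | bRel R a x0 y0 d v u} = {y0} := by
              ext u
              simp only [Set.mem_setOf_eq, Set.mem_singleton_iff]
              constructor
              · rintro (⟨-, -, -, rfl⟩ | ⟨-, -, -, h⟩ | ⟨-, h, -⟩ | ⟨-, -, h⟩)
                · rfl
                · exact absurd h hvy
                · omega
                · exact absurd h hvx
              · rintro rfl
                exact Or.inl ⟨hvR, by omega, by omega, rfl⟩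
            rw [hset2, Set.ncard_singleton]
            simp [hvR]
          · have hset2 : {u | bRel R a x0 y0 d v u} = {x0} := by
              ext u
              simp only [Set.mem_setOf_eq, Set.mem_singleton_iff]
              constructor
              · rintro (⟨-, -, h, -⟩ | ⟨-, -, -, h⟩ | ⟨-, -, rfl⟩ | ⟨-, -, h⟩)
                · omega
                · exact absurd h hvy
                · rfl
                · exact absurd h hvx
              · rintro rfl
                exact Or.inr (Or.inr (Or.inl ⟨hvR, by omega, rfl⟩))
            rw [hset2, Set.ncard_singleton]
            simp [hvR]
        · have hset2 : {u | bRel R a x0 y0 d v u} = ∅ := by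
            ext u
            simp only [Set.mem_setOf_eq, Set.mem_empty_iff_false, iff_false]
            rintro (⟨h, -⟩ | ⟨-, -, -, h⟩ | ⟨h, -⟩ | ⟨-, -, h⟩)
            exacts [hvR h, hvy h, hvR h, hvx h]
          rw [hset2, Set.ncard_empty]
          simp [hvR]
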